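/- arXiv:math/0211356 — 4 statements merged into one kernel-verified Lean document; each statement's English description precedes it below -/
import Mathlib

section
/- Let x be a nonzero traceless Hermitian n×n complex matrix. Then x has at least one strictly positive eigenvalue and at least one strictly negative eigenvalue, and consequently the map t ↦ tr(A · exp(tx)) tends to ∞ as t → ±∞ for any positive definite matrix A. -/
open Matrix Filter
open scoped ComplexOrder

/-- a nonzero traceless Hermitian matrix has a strictly positive and a
strictly negative eigenvalue, and consequently `t ↦ tr(A · exp(t x))` tends to `∞`
as `t → ±∞` for every positive definite `A`. -/
theorem stmt3 (n : ℕ) (x : Matrix (Fin n) (Fin n) ℂ)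
    (hx : x.IsHermitian) (htr : x.trace = 0) (hne : x ≠ 0) :
    (∃ i, (0:ℝ) < hx.eigenvalues i) ∧ (∃ j, hx.eigenvalues j < (0:ℝ)) ∧
    (∀ A : Matrix (Fin n) (Fin n) ℂ, A.PosDef →
      Filter.Tendsto (fun t : ℝ => ((A * NormedSpace.exp ((t : ℂ) • x)).trace).re)
        Filter.atTop Filter.atTop ∧
      Filter.Tendsto (fun t : ℝ => ((A * NormedSpace.exp ((t : ℂ) • x)).trace).re)
        Filter.atBot Filter.atTop) := by
  classical
  set U : Matrix (Fin n) (Fin n) ℂ := (hx.eigenvectorUnitary : Matrix (Fin n) (Fin n) ℂ) with hUdef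
  set lam : Fin n → ℝ := hx.eigenvalues with hlam
  have hU : star U * U = 1 := (Matrix.mem_unitaryGroup_iff').mp hx.eigenvectorUnitary.2
  have hU' : U * star U = 1 := (Matrix.mem_unitaryGroup_iff).mp hx.eigenvectorUnitary.2
  have hUunit : IsUnit U := @isUnit_of_invertible _ _ U (invertibleOfLeftInverse U (star U) hU)
  have hUinv : U⁻¹ = star U := Matrix.inv_eq_left_inv hU
  have hspec : x = U * Matrix.diagonal (RCLike.ofReal ∘ lam) * star U := hx.spectral_theorem
  -- sum of eigenvalues is zero
  have hsum : ∑ i, lam i = 0 := by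
    have h := congrArg Matrix.trace hspec
    rw [htr, Matrix.trace_mul_cycle, hU, one_mul, Matrix.trace_diagonal] at h
    have : ((∑ i, lam i : ℝ) : ℂ) = 0 := by
      rw [Complex.ofReal_sum]; exact h.symm
    exact_mod_cast this
  -- eigenvalues not all zero
  have hlamne : lam ≠ 0 := by
    intro h0
    apply hne
    rw [hspec, h0]
    have : RCLike.ofReal ∘ (0 : Fin n → ℝ) = (0 : Fin n → ℂ) := by funext j; simp
    rw [this, show Matrix.diagonal (0 : Fin n → ℂ) = 0 from Matrix.diagonal_zero,
      mul_zero, zero_mul]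
  obtain ⟨i0, hi0⟩ := Function.ne_iff.mp hlamne
  simp only [Pi.zero_apply] at hi0
  have hpos : ∃ i, (0:ℝ) < lam i := by
    by_contra h
    push_neg at h
    have hall : ∀ i ∈ Finset.univ, lam i = 0 := by
      intro i _
      have := (Finset.sum_eq_zero_iff_of_nonneg (fun j _ => neg_nonneg.mpr (h j))).mp
        (by rw [Finset.sum_neg_distrib, hsum, neg_zero]) i (Finset.mem_univ i)
      linarith [neg_eq_zero.mp this]
    exact hi0 (hall i0 (Finset.mem_univ i0))
  have hneg : ∃ j, lam j < (0:ℝ) := by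
    by_contra h
    push_neg at h
    have hall := (Finset.sum_eq_zero_iff_of_nonneg (fun j _ => h j)).mp hsum
    exact hi0 (hall i0 (Finset.mem_univ i0))
  refine ⟨hpos, hneg, ?_⟩
  intro A hA
  -- the key formula
  set c : Fin n → ℝ := fun i => ((star U * A * U) i i).re with hc
  have hcpos : ∀ i, 0 < c i := by
    intro i
    set v : Fin n → ℂ := fun j => U j i with hv
    have hvne : v ≠ 0 := by
      intro h0
      have h1 : (star U * U) i i = 1 := by rw [hU]; simp
      rw [Matrix.mul_apply] at h1
      simp only [Matrix.star_apply] at h1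
      have : ∀ j, star (U j i) * U j i = 0 := by
        intro j
        have : U j i = 0 := congrFun h0 j
        simp [this]
      rw [Finset.sum_congr rfl (fun j _ => this j)] at h1
      simp at h1
    have hq := hA.dotProduct_mulVec_pos hvne
    have heq : (star U * A * U) i i = dotProduct (star v) (A *ᵥ v) := by
      simp only [Matrix.mul_apply, dotProduct, Matrix.mulVec, dotProduct,
        Matrix.star_apply, Pi.star_apply, hv, Finset.sum_mul, Finset.mul_sum]
      rw [Finset.sum_comm]
      apply Finset.sum_congr rfl
      intro j _
      apply Finset.sum_congr rfl
      intro k _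
      ring
    rw [hc]
    simp only [heq]
    exact (Complex.lt_def.mp hq).1
  have key : ∀ t : ℝ,
      ((A * NormedSpace.exp ((t : ℂ) • x)).trace).re = ∑ i, c i * Real.exp (t * lam i) := by
    intro t
    have hexp : NormedSpace.exp ((t : ℂ) • x)
        = U * Matrix.diagonal (fun i => Complex.exp ((t : ℂ) * (lam i : ℂ))) * star U := by
      rw [hspec]
      have h1 : (t : ℂ) • (U * Matrix.diagonal (RCLike.ofReal ∘ lam) * star U)
          = U * ((t : ℂ) • Matrix.diagonal (RCLike.ofReal ∘ lam)) * U⁻¹ := by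
        rw [hUinv, Matrix.mul_smul, Matrix.smul_mul]
      rw [h1, Matrix.exp_conj _ _ hUunit, hUinv]
      have heq2 : NormedSpace.exp ((t:ℂ) • Matrix.diagonal (RCLike.ofReal ∘ lam))
          = Matrix.diagonal (fun i => Complex.exp ((t:ℂ) * (lam i : ℂ))) := by
        rw [← Matrix.diagonal_smul, Matrix.exp_diagonal]
        apply congrArg Matrix.diagonal
        funext i
        rw [Pi.coe_exp, ← Complex.exp_eq_exp_ℂ]
        simp [smul_eq_mul]
      rw [heq2]
    rw [hexp]
    have htrace : (A * (U * Matrix.diagonal (fun i => Complex.exp ((t : ℂ) * (lam i : ℂ))) * star U)).trace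
        = ∑ i, (star U * A * U) i i * Complex.exp ((t : ℂ) * (lam i : ℂ)) := by
      rw [show A * (U * Matrix.diagonal (fun i => Complex.exp ((t : ℂ) * (lam i : ℂ))) * star U)
        = (A * U) * Matrix.diagonal (fun i => Complex.exp ((t : ℂ) * (lam i : ℂ))) * star U by
          rw [← mul_assoc, ← mul_assoc], Matrix.trace_mul_cycle, ← mul_assoc]
      rw [Matrix.trace]
      apply Finset.sum_congr rfl
      intro i _
      rw [Matrix.diag_apply, Matrix.mul_diagonal]
    rw [htrace, Complex.re_sum]
    apply Finset.sum_congr rfl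
    intro i _
    have : ((t : ℂ) * (lam i : ℂ)) = ((t * lam i : ℝ) : ℂ) := by push_cast; ring
    rw [this, ← Complex.ofReal_exp]
    simp only [Complex.mul_re, Complex.ofReal_re, Complex.ofReal_im, mul_zero, sub_zero]
    rfl
  have main : ∀ (l : Filter ℝ) (k : Fin n), Tendsto (fun t : ℝ => t * lam k) l atTop →
      Tendsto (fun t : ℝ => ((A * NormedSpace.exp ((t : ℂ) • x)).trace).re) l atTop := by
    intro l k hk
    have h1 : Tendsto (fun t : ℝ => c k * Real.exp (t * lam k)) l atTop :=
      (Real.tendsto_exp_atTop.comp hk).const_mul_atTop (hcpos k)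
    apply tendsto_atTop_mono _ h1
    intro t
    rw [key t]
    exact Finset.single_le_sum (f := fun i => c i * Real.exp (t * lam i))
      (fun i _ => le_of_lt (mul_pos (hcpos i) (Real.exp_pos _))) (Finset.mem_univ k)
  obtain ⟨ip, hip⟩ := hpos
  obtain ⟨jn, hjn⟩ := hneg
  constructor
  · exact main atTop ip (tendsto_id.atTop_mul_const hip)
  · exact main atBot jn (tendsto_id.atBot_mul_const_of_neg hjn)
end

section
/- Let y'_1 ≥ y'_2 ≥ ⋯ ≥ y'_n = 0 with Σ y'_i = 1, not all y'_i equal. Then the function g(t) = (1/n + t)^n / ∏_{i=1}^n (y'_i + t) is strictly decreasing on (0, ∞). -/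
open Real Set Finset

/-- for `y'_1 ≥ ⋯ ≥ y'_n = 0` with `∑ y'_i = 1`, not all equal, the
function `g(t) = (1/n + t)^n / ∏ i (y'_i + t)` is strictly decreasing on `(0, ∞)`. -/
theorem stmt8 (n : ℕ) (hn : 0 < n) (y' : Fin n → ℝ) (hmono : Antitone y')
    (hlast : y' ⟨n - 1, by omega⟩ = 0) (hsum : ∑ i, y' i = 1)
    (hne : ∃ i j, y' i ≠ y' j) :
    StrictAntiOn (fun t : ℝ => ((1 / n : ℝ) + t) ^ n / ∏ i, (y' i + t))
      (Set.Ioi (0 : ℝ)) := by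
  have hn' : (0:ℝ) < n := Nat.cast_pos.mpr hn
  have hyn : ∀ i, 0 ≤ y' i := by
    intro i
    have hle : i ≤ (⟨n - 1, by omega⟩ : Fin n) := by
      rw [Fin.le_def]; simp; omega
    simpa [hlast] using hmono hle
  have hpos : ∀ t ∈ Ioi (0:ℝ), ∀ i, 0 < y' i + t := fun t ht i =>
    add_pos_of_nonneg_of_pos (hyn i) ht
  have h1n : ∀ t ∈ Ioi (0:ℝ), 0 < (1/n : ℝ) + t := fun t ht =>
    add_pos (by positivity) ht
  -- the log function
  set f : ℝ → ℝ := fun t => n * Real.log ((1/n:ℝ) + t) - ∑ i, Real.log (y' i + t) with hf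
  have hexp : ∀ t ∈ Ioi (0:ℝ),
      ((1 / n : ℝ) + t) ^ n / ∏ i, (y' i + t) = Real.exp (f t) := by
    intro t ht
    rw [hf, Real.exp_sub]
    congr 1
    · rw [Real.exp_nat_mul, Real.exp_log (h1n t ht)]
    · rw [Real.exp_sum]
      exact Finset.prod_congr rfl fun i _ => (Real.exp_log (hpos t ht i)).symm
  -- derivative of f
  have hderiv : ∀ t ∈ Ioi (0:ℝ),
      HasDerivAt f (n * ((1/n:ℝ) + t)⁻¹ - ∑ i, (y' i + t)⁻¹) t := by
    intro t ht
    have h1 : HasDerivAt (fun t : ℝ => (n:ℝ) * Real.log ((1/n:ℝ) + t))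
        (n * ((1/n:ℝ) + t)⁻¹) t := by
      have := ((hasDerivAt_id t).const_add (1/n:ℝ)).log (h1n t ht).ne'
      simpa using this.const_mul (n:ℝ)
    have h2 : HasDerivAt (fun t : ℝ => ∑ i, Real.log (y' i + t))
        (∑ i, (y' i + t)⁻¹) t := by
      apply HasDerivAt.fun_sum
      intro i _
      have := ((hasDerivAt_id t).const_add (y' i)).log (hpos t ht i).ne'
      simpa using this
    exact h1.sub h2
  -- derivative negative via strict Jensen for x⁻¹
  have hneg : ∀ t ∈ Ioi (0:ℝ), n * ((1/n:ℝ) + t)⁻¹ - ∑ i, (y' i + t)⁻¹ < 0 := by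
    intro t ht
    have hconv : StrictConvexOn ℝ (Ioi (0:ℝ)) fun x : ℝ => x ^ (-1 : ℤ) :=
      strictConvexOn_zpow (by norm_num) (by norm_num)
    obtain ⟨i, j, hij⟩ := hne
    have hJ := hconv.map_sum_lt (t := Finset.univ) (w := fun _ : Fin n => (1/n : ℝ))
      (p := fun i => y' i + t)
      (fun i _ => by positivity)
      (by simp [Finset.sum_const, mul_comm]; field_simp)
      (fun i _ => hpos t ht i)
      ⟨i, Finset.mem_univ i, j, Finset.mem_univ j, by simpa using hij⟩
    have hsum2 : ∑ k, (1/n : ℝ) • (y' k + t) = (1/n:ℝ) + t := by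
      rw [← Finset.smul_sum, Finset.sum_add_distrib, hsum, Finset.sum_const]
      simp [smul_eq_mul]
      field_simp
    rw [hsum2] at hJ
    simp only [zpow_neg_one, smul_eq_mul, ← Finset.mul_sum] at hJ
    have : (n:ℝ) * ((1/n:ℝ) + t)⁻¹ < ∑ k, (y' k + t)⁻¹ := by
      have := (mul_lt_mul_iff_right₀ hn').mpr hJ
      rw [← mul_assoc] at this
      field_simp at this ⊢
      linarith [this]
    linarith
  have hcont : ContinuousOn f (Ioi 0) := fun t ht => ((hderiv t ht).continuousAt).continuousWithinAt
  have hanti : StrictAntiOn f (Ioi 0) := by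
    apply strictAntiOn_of_deriv_neg (convex_Ioi 0) hcont
    intro t ht
    rw [interior_Ioi] at ht
    rw [(hderiv t ht).deriv]
    exact hneg t ht
  intro a ha b hb hab
  dsimp only
  rw [hexp a ha, hexp b hb]
  exact Real.exp_lt_exp.mpr (hanti ha hb hab)
end

section
/- The map φ: Σ → A_q defined by φ(y')_i = q^{-1} n (y'_i + α(y'))/(1 + n α(y')), where α(y') is the unique real making ∏_i φ(y')_i = 1, is a homeomorphism between the simplex Σ = {y'_1 ≥ ⋯ ≥ y'_n = 0, Σ y'_i = 1} and A_q = {y''_1 ≥ ⋯ ≥ y''_n ≥ 0, ∏ y''_i = 1, Σ y''_i = n/q}, with inverse y'' ↦ ((y''_i − y''_n)/(Σ_j y''_j − n·y''_n))_i. -/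
open Finset

private lemma s11.lt (n : ℕ) (hn : 2 ≤ n) : n - 1 < n := by omega

private lemma s11.last_le (n : ℕ) (hn : 2 ≤ n) (i : Fin n) : i ≤ (⟨n-1, s11.lt n hn⟩ : Fin n) := by
  rcases i with ⟨v, hv⟩; exact Fin.mk_le_mk.2 (by omega)

private lemma s11.denom_pos (n : ℕ) (hn : 2 ≤ n) (q : ℝ) (hq0 : 0 < q) (hq1 : q < 1)
    (y : Fin n → ℝ) (hmono : Antitone y) (hpos : ∀ i, 0 ≤ y i)
    (hprod : ∏ i, y i = 1) (hsum : ∑ i, y i = n / q) :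
    0 < (∑ j, y j) - n * y ⟨n-1, s11.lt n hn⟩ := by
  set c := y ⟨n-1, s11.lt n hn⟩ with hc
  have hc0 : 0 ≤ c := hpos _
  have hcn : c ^ n ≤ 1 := by
    calc c ^ n = ∏ _i : Fin n, c := by simp
    _ ≤ ∏ i, y i := Finset.prod_le_prod (fun i _ => hc0) (fun i _ => hmono (s11.last_le n hn i))
    _ = 1 := hprod
  have hc1 : c ≤ 1 := by
    by_contra h
    push_neg at h
    exact absurd hcn (not_le.2 (one_lt_pow₀ h (by omega)))
  have hn2 : (2:ℝ) ≤ n := by exact_mod_cast hn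
  rw [hsum, sub_pos]
  have hnc : (n:ℝ) * c ≤ n := by nlinarith
  have : (n:ℝ) * c * q < n := by nlinarith [mul_nonneg (sub_nonneg.2 hnc) hq0.le, mul_pos (show (0:ℝ) < n by linarith) (sub_pos.2 hq1)]
  exact (lt_div_iff₀ hq0).2 this

private lemma s11.bwd_mem (n : ℕ) (hn : 2 ≤ n) (q : ℝ) (hq0 : 0 < q) (hq1 : q < 1)
    (y : Fin n → ℝ) (hmono : Antitone y) (hpos : ∀ i, 0 ≤ y i)
    (hprod : ∏ i, y i = 1) (hsum : ∑ i, y i = n / q) :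
    (Antitone fun i => (y i - y ⟨n-1, s11.lt n hn⟩) / ((∑ j, y j) - n * y ⟨n-1, s11.lt n hn⟩)) ∧
    (y ⟨n-1, s11.lt n hn⟩ - y ⟨n-1, s11.lt n hn⟩) / ((∑ j, y j) - n * y ⟨n-1, s11.lt n hn⟩) = 0 ∧
    ∑ i, (y i - y ⟨n-1, s11.lt n hn⟩) / ((∑ j, y j) - n * y ⟨n-1, s11.lt n hn⟩) = 1 := by
  have hD : 0 < (∑ j, y j) - n * y ⟨n-1, s11.lt n hn⟩ :=
    s11.denom_pos n hn q hq0 hq1 y hmono hpos hprod hsum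
  refine ⟨fun i j hij => by dsimp only; gcongr ?_ / _; exact sub_le_sub_right (hmono hij) _, by simp, ?_⟩
  rw [← Finset.sum_div, Finset.sum_sub_distrib, Finset.sum_const, Finset.card_univ,
    Fintype.card_fin, nsmul_eq_mul, div_self hD.ne']

private lemma s11.exists_fwd (n : ℕ) (hn : 2 ≤ n) (q : ℝ) (hq0 : 0 < q) (hq1 : q < 1)
    (w : Fin n → ℝ) (hmono : Antitone w) (hlast : w ⟨n-1, s11.lt n hn⟩ = 0) (hsum : ∑ i, w i = 1) :
    ∃ α : ℝ, 0 ≤ α ∧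
      (Antitone fun i => q⁻¹ * n * (w i + α) / (1 + n * α)) ∧
      (∀ i, 0 ≤ q⁻¹ * n * (w i + α) / (1 + n * α)) ∧
      (∏ i, q⁻¹ * n * (w i + α) / (1 + n * α)) = 1 ∧
      (∑ i, q⁻¹ * n * (w i + α) / (1 + n * α)) = n / q ∧
      (∀ i, ((q⁻¹ * n * (w i + α) / (1 + n * α)) - (q⁻¹ * n * (w ⟨n-1, s11.lt n hn⟩ + α) / (1 + n * α))) /
        ((∑ j, q⁻¹ * n * (w j + α) / (1 + n * α)) - n * (q⁻¹ * n * (w ⟨n-1, s11.lt n hn⟩ + α) / (1 + n * α))) = w i) := by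
  have hw0 : ∀ i, 0 ≤ w i := fun i => hlast ▸ hmono (s11.last_le n hn i)
  have hn0 : (0:ℝ) < n := by positivity
  have hn2 : (2:ℝ) ≤ n := by exact_mod_cast hn
  set g : ℝ → ℝ := fun α => (∏ i, (q⁻¹ * n * (w i + α))) - (1 + n*α)^n with hg_def
  have hgc : Continuous g := by
    apply Continuous.sub
    · exact continuous_finset_prod _ (fun i _ => by continuity)
    · continuity
  have hg0 : g 0 = -1 := by
    have h0 : (∏ i, (q⁻¹ * n * w i)) = 0 :=
      Finset.prod_eq_zero (Finset.mem_univ (⟨n-1, s11.lt n hn⟩ : Fin n)) (by simp [hlast])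
    simp [hg_def, h0]
  have h1q : (0:ℝ) < n * (1 - q) := by nlinarith
  set α₀ : ℝ := q / (n*(1-q)) + 1 with hα₀_def
  have hα₀ : 0 < α₀ := by positivity
  have hkey0 : (n:ℝ) * α₀ * (1 - q) = q + n*(1-q) := by
    rw [hα₀_def]; linear_combination div_mul_cancel₀ q h1q.ne'
  have hkey : 1 + n*α₀ < q⁻¹ * n * α₀ := by
    rw [show q⁻¹ * n * α₀ = (n * α₀) / q by field_simp, lt_div_iff₀ hq0]
    nlinarith
  have hd₀ : (0:ℝ) < 1 + n*α₀ := by positivity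
  have hgα₀ : 0 < g α₀ := by
    rw [hg_def, sub_pos]
    calc (1 + n*α₀)^n < (q⁻¹ * n * α₀)^n := by
          exact pow_lt_pow_left₀ hkey hd₀.le (by omega)
      _ = ∏ _i : Fin n, (q⁻¹ * n * α₀) := by simp
      _ ≤ ∏ i, (q⁻¹ * n * (w i + α₀)) := by
          apply Finset.prod_le_prod (fun i _ => by positivity)
          intro i _
          have := hw0 i
          have h1 : (0:ℝ) < q⁻¹ * n := by positivity
          nlinarith
  obtain ⟨α, hαmem, hgα⟩ : ∃ α ∈ Set.Icc (0:ℝ) α₀, g α = 0 := by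
    have := intermediate_value_Icc hα₀.le hgc.continuousOn
      (by rw [hg0]; constructor <;> linarith : (0:ℝ) ∈ Set.Icc (g 0) (g α₀))
    obtain ⟨α, hmem, heq⟩ := this
    exact ⟨α, hmem, heq⟩
  have hα : 0 ≤ α := hαmem.1
  have hd : (0:ℝ) < 1 + n*α := by positivity
  set c : ℝ := q⁻¹ * n / (1 + n*α) with hc_def
  have hc : 0 < c := by positivity
  have hy : ∀ (x : ℝ), q⁻¹ * n * (x + α) / (1 + n * α) = c * (x + α) := by
    intro x; rw [hc_def, mul_div_right_comm]
  have hprod : (∏ i, q⁻¹ * n * (w i + α) / (1 + n * α)) = 1 := by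
    have hnum : (∏ i, (q⁻¹ * n * (w i + α))) = (1 + n*α)^n := by
      have := hgα; rw [hg_def] at this; linarith [sub_eq_zero.1 this]
    rw [Finset.prod_div_distrib, Finset.prod_const, Finset.card_univ, Fintype.card_fin,
      hnum, div_self (by positivity)]
  have hsum' : (∑ i, q⁻¹ * n * (w i + α) / (1 + n * α)) = n / q := by
    simp only [hy]
    rw [← Finset.mul_sum, Finset.sum_add_distrib, hsum, Finset.sum_const, Finset.card_univ,
      Fintype.card_fin, nsmul_eq_mul, hc_def]
    field_simp
  refine ⟨α, hα, ?_, ?_, hprod, hsum', ?_⟩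
  · intro i j hij
    simp only [hy]
    have := hmono hij
    nlinarith
  · intro i
    rw [hy]
    have := hw0 i
    positivity
  · intro i
    have hsum2 : (∑ i, c * (w i + α)) = n / q := by simp only [← hy]; exact hsum'
    have hy2 : q⁻¹ * ↑n * α / (1 + ↑n * α) = c * α := by rw [hc_def, mul_div_right_comm]
    simp only [hy, hlast, zero_add, hy2, hsum2]
    have hden : (n:ℝ)/q - n * (c * α) = c := by
      have h1 : (n:ℝ)/q = c * (1 + n*α) := by rw [hc_def]; field_simp
      rw [h1]; ring
    rw [hden, show c * (w i + α) - c * α = c * w i by ring, mul_div_cancel_left₀ _ hc.ne']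

private lemma s11.inj_aux (n : ℕ) (hn : 2 ≤ n) (q : ℝ) (hq0 : 0 < q) (hq1 : q < 1)
    (y z : Fin n → ℝ)
    (hymono : Antitone y) (hypos : ∀ i, 0 ≤ y i) (hyprod : ∏ i, y i = 1) (hysum : ∑ i, y i = n / q)
    (hzmono : Antitone z) (hzpos : ∀ i, 0 ≤ z i) (hzprod : ∏ i, z i = 1) (hzsum : ∑ i, z i = n / q)
    (heq : ∀ i, (y i - y ⟨n-1, s11.lt n hn⟩) / ((∑ j, y j) - n * y ⟨n-1, s11.lt n hn⟩)
      = (z i - z ⟨n-1, s11.lt n hn⟩) / ((∑ j, z j) - n * z ⟨n-1, s11.lt n hn⟩))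
    (hlt : y ⟨n-1, s11.lt n hn⟩ < z ⟨n-1, s11.lt n hn⟩) : False := by
  have hn0 : (0:ℝ) < n := by positivity
  set a := y (⟨n-1, s11.lt n hn⟩ : Fin n) with ha
  set b := z (⟨n-1, s11.lt n hn⟩ : Fin n) with hb
  have hDy : 0 < (∑ j, y j) - n * a := s11.denom_pos n hn q hq0 hq1 y hymono hypos hyprod hysum
  have hDz : 0 < (∑ j, z j) - n * b := s11.denom_pos n hn q hq0 hq1 z hzmono hzpos hzprod hzsum
  rw [hysum] at hDy
  rw [hzsum] at hDz
  set Dy : ℝ := n/q - n * a with hDy_def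
  set Dz : ℝ := n/q - n * b with hDz_def
  have hDzDy : Dz < Dy := by rw [hDy_def, hDz_def]; nlinarith
  set t : ℝ := Dz / Dy with ht_def
  have ht0 : 0 < t := div_pos hDz hDy
  have ht1 : t < 1 := (div_lt_one hDy).2 hDzDy
  have hzi : ∀ i, z i = t * y i + (1 - t) * (1/q) := by
    intro i
    have hcross : (y i - a) * Dz = (z i - b) * Dy := by
      have := heq i
      rw [hysum, hzsum] at this
      rw [div_eq_div_iff hDy.ne' hDz.ne'] at this
      linarith [this]
    have key : z i * Dy = Dz * y i + (Dy - Dz) * (1/q) := by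
      rw [hDy_def, hDz_def] at hcross ⊢
      linear_combination -hcross
    have hz' : z i = (Dz * y i + (Dy - Dz) * (1/q)) / Dy := eq_div_of_mul_eq hDy.ne' key
    rw [hz', ht_def]
    field_simp
  have hgm : ∀ i, (y i) ^ t * (1/q) ^ (1 - t) ≤ z i := by
    intro i
    rw [hzi i]
    exact Real.geom_mean_le_arith_mean2_weighted ht0.le (by linarith) (hypos i)
      (by positivity) (by ring)
  have hK : (∏ i, (y i) ^ t * (1/q) ^ (1 - t)) ≤ ∏ i, z i :=
    Finset.prod_le_prod (fun i _ => mul_nonneg (Real.rpow_nonneg (hypos i) t)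
      (Real.rpow_nonneg (by positivity) _)) (fun i _ => hgm i)
  rw [hzprod] at hK
  have hKval : (∏ i, (y i) ^ t * (1/q) ^ (1 - t)) = ((1/q) ^ (1 - t)) ^ n := by
    rw [Finset.prod_mul_distrib, Finset.prod_const, Finset.card_univ, Fintype.card_fin,
      Real.finset_prod_rpow _ _ (fun i _ => hypos i), hyprod, Real.one_rpow, one_mul]
  have h1 : (1:ℝ) < (1/q) ^ (1 - t) := by
    rw [Real.one_lt_rpow_iff_of_pos (by positivity)]
    left
    constructor
    · rw [lt_div_iff₀ hq0]; linarith
    · linarith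
  have h2 : (1:ℝ) < ((1/q) ^ (1 - t)) ^ n := one_lt_pow₀ h1 (by omega)
  rw [hKval] at hK
  linarith

/-- the map `φ(y')_i = q⁻¹ n (y'_i + α(y'))/(1 + n α(y'))`, where
`α(y') ≥ 0` is the unique real making `∏ i φ(y')_i = 1`, is a homeomorphism from the
simplex `Σ = {y'_1 ≥ ⋯ ≥ y'_n = 0, ∑ y'_i = 1}` onto
`A_q = {y''_1 ≥ ⋯ ≥ y''_n ≥ 0, ∏ y''_i = 1, ∑ y''_i = n/q}`, with inverse
`y'' ↦ ((y''_i − y''_n)/(∑_j y''_j − n y''_n))_i`. -/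
theorem stmt11 (n : ℕ) (hn : 2 ≤ n) (q : ℝ) (hq0 : 0 < q) (hq1 : q < 1) :
    ∃ φ : ({y' : Fin n → ℝ | Antitone y' ∧ y' ⟨n - 1, by omega⟩ = 0 ∧ ∑ i, y' i = 1}) ≃ₜ
          ({y'' : Fin n → ℝ | Antitone y'' ∧ (∀ i, 0 ≤ y'' i) ∧
              ∏ i, y'' i = 1 ∧ ∑ i, y'' i = n / q}),
      (∀ y', ∃ α : ℝ, 0 ≤ α ∧
        ∀ i, (φ y' : Fin n → ℝ) i = q⁻¹ * n * ((y' : Fin n → ℝ) i + α) / (1 + n * α)) ∧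
      (∀ y'', (φ.symm y'' : Fin n → ℝ) = fun i =>
        ((y'' : Fin n → ℝ) i - (y'' : Fin n → ℝ) ⟨n - 1, by omega⟩) /
          ((∑ j, (y'' : Fin n → ℝ) j) - n * (y'' : Fin n → ℝ) ⟨n - 1, by omega⟩)) := by
  classical
  set L : Fin n := ⟨n - 1, by omega⟩ with hL
  set Sset : Set (Fin n → ℝ) :=
    {y' : Fin n → ℝ | Antitone y' ∧ y' ⟨n - 1, by omega⟩ = 0 ∧ ∑ i, y' i = 1} with hSset
  set Tset : Set (Fin n → ℝ) :=
    {y'' : Fin n → ℝ | Antitone y'' ∧ (∀ i, 0 ≤ y'' i) ∧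
      ∏ i, y'' i = 1 ∧ ∑ i, y'' i = n / q} with hTset
  set bwdf : (Fin n → ℝ) → (Fin n → ℝ) :=
    fun y i => (y i - y L) / ((∑ j, y j) - n * y L) with hbwdf
  have hmem : ∀ y : Tset, bwdf (y : Fin n → ℝ) ∈ Sset := by
    rintro ⟨y, hy1, hy2, hy3, hy4⟩
    obtain ⟨h1, h2, h3⟩ := s11.bwd_mem n hn q hq0 hq1 y hy1 hy2 hy3 hy4
    exact ⟨h1, h2, h3⟩
  set f : Tset → Sset := fun y => ⟨bwdf (y : Fin n → ℝ), hmem y⟩ with hf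
  have hinj : Function.Injective f := by
    rintro ⟨y, hy1, hy2, hy3, hy4⟩ ⟨z, hz1, hz2, hz3, hz4⟩ hyz
    have hval : bwdf y = bwdf z := congrArg Subtype.val hyz
    have heq : ∀ i, (y i - y L) / ((∑ j, y j) - n * y L)
        = (z i - z L) / ((∑ j, z j) - n * z L) := fun i => congrFun hval i
    rcases lt_trichotomy (y L) (z L) with h | h | h
    · exact absurd (s11.inj_aux n hn q hq0 hq1 y z hy1 hy2 hy3 hy4 hz1 hz2 hz3 hz4 heq h) id
    · refine Subtype.ext (funext fun i => ?_)
      have hD : 0 < (∑ j, y j) - n * y L := s11.denom_pos n hn q hq0 hq1 y hy1 hy2 hy3 hy4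
      have hD' : (∑ j, z j) - n * z L = (∑ j, y j) - n * y L := by rw [hy4, hz4, h]
      have hi := heq i
      rw [hD', div_eq_div_iff hD.ne' hD.ne'] at hi
      have := mul_right_cancel₀ hD.ne' hi
      linarith
    · exact absurd (s11.inj_aux n hn q hq0 hq1 z y hz1 hz2 hz3 hz4 hy1 hy2 hy3 hy4
        (fun i => (heq i).symm) h) id
  have hsurj : Function.Surjective f := by
    rintro ⟨w, hw1, hw2, hw3⟩
    obtain ⟨α, hα, hanti, hpos, hprod, hsum, hbwd⟩ :=
      s11.exists_fwd n hn q hq0 hq1 w hw1 hw2 hw3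
    refine ⟨⟨fun i => q⁻¹ * n * (w i + α) / (1 + n * α), hanti, hpos, hprod, hsum⟩, ?_⟩
    exact Subtype.ext (funext fun i => hbwd i)
  set e : Tset ≃ Sset := Equiv.ofBijective f ⟨hinj, hsurj⟩ with he
  have hTclosed : IsClosed Tset := by
    have h1 : IsClosed {y : Fin n → ℝ | Antitone y} := by
      have : {y : Fin n → ℝ | Antitone y} =
          ⋂ (i : Fin n) (j : Fin n) (_ : i ≤ j), {y : Fin n → ℝ | y j ≤ y i} := by
        ext y
        simp only [Set.mem_setOf_eq, Set.mem_iInter]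
        exact ⟨fun h i j hij => h hij, fun h i j hij => h i j hij⟩
      rw [this]
      exact isClosed_iInter fun i => isClosed_iInter fun j => isClosed_iInter fun _ =>
        isClosed_le (continuous_apply j) (continuous_apply i)
    have h2 : IsClosed {y : Fin n → ℝ | ∀ i, 0 ≤ y i} := by
      have : {y : Fin n → ℝ | ∀ i, 0 ≤ y i} = ⋂ (i : Fin n), {y : Fin n → ℝ | 0 ≤ y i} := by
        ext y; simp [Set.mem_iInter]
      rw [this]
      exact isClosed_iInter fun i => isClosed_le continuous_const (continuous_apply i)
    have h3 : IsClosed {y : Fin n → ℝ | ∏ i, y i = 1} :=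
      isClosed_eq (continuous_finset_prod _ fun i _ => continuous_apply i) continuous_const
    have h4 : IsClosed {y : Fin n → ℝ | ∑ i, y i = n / q} :=
      isClosed_eq (continuous_finset_sum _ fun i _ => continuous_apply i) continuous_const
    have : Tset = {y : Fin n → ℝ | Antitone y} ∩ ({y | ∀ i, 0 ≤ y i} ∩
        ({y | ∏ i, y i = 1} ∩ {y | ∑ i, y i = n / q})) := by
      ext y; simp only [hTset, Set.mem_setOf_eq, Set.mem_inter_iff]
    rw [this]
    exact h1.inter (h2.inter (h3.inter h4))
  have hTcomp : IsCompact Tset := by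
    refine IsCompact.of_isClosed_subset
      (isCompact_Icc (a := fun _ : Fin n => (0:ℝ)) (b := fun _ => n / q)) hTclosed ?_
    rintro y ⟨hy1, hy2, hy3, hy4⟩
    constructor
    · intro i; exact hy2 i
    · intro i
      have := Finset.single_le_sum (fun j _ => hy2 j) (Finset.mem_univ i)
      rw [hy4] at this
      exact this
  have : CompactSpace ↥Tset := isCompact_iff_compactSpace.mp hTcomp
  have hcont : Continuous e := by
    show Continuous f
    apply Continuous.subtype_mk
    apply continuous_pi
    intro i
    refine Continuous.div ?_ ?_ ?_
    · exact ((continuous_apply i).comp continuous_subtype_val).sub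
        ((continuous_apply L).comp continuous_subtype_val)
    · exact (continuous_finset_sum _ fun j _ => (continuous_apply j).comp
        continuous_subtype_val).sub
        (continuous_const.mul ((continuous_apply L).comp continuous_subtype_val))
    · rintro ⟨y, hy1, hy2, hy3, hy4⟩
      exact (s11.denom_pos n hn q hq0 hq1 y hy1 hy2 hy3 hy4).ne'
  set h : Tset ≃ₜ Sset := hcont.homeoOfEquivCompactToT2 with hh
  refine ⟨h.symm, ?_, ?_⟩
  · intro y'
    obtain ⟨α, hα, hanti, hpos, hprod, hsum, hbwd⟩ :=
      s11.exists_fwd n hn q hq0 hq1 (y' : Fin n → ℝ) y'.2.1 y'.2.2.1 y'.2.2.2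
    refine ⟨α, hα, fun i => ?_⟩
    set yy : Tset := ⟨fun i => q⁻¹ * n * ((y' : Fin n → ℝ) i + α) / (1 + n * α),
      hanti, hpos, hprod, hsum⟩ with hyy
    have hψ : h yy = y' := Subtype.ext (funext fun i => hbwd i)
    have : h.symm y' = yy := by rw [← hψ, Homeomorph.symm_apply_apply]
    rw [this]
  · intro y''
    rfl
end

section
/- (Alternant identity) For t_1,…,t_n distinct and a strictly decreasing sequence of naturals λ_1 + n − 1 > λ_2 + n − 2 > ⋯ > λ_n, det[t_i^{λ_j + n − j}]_{i,j} = V(t_1,…,t_n) · s_λ(t_1,…,t_n), where V is the Vandermonde ∏_{i<j}(t_j − t_i) (with appropriate sign convention) and s_λ is the Schur polynomial. -/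
open MvPolynomial Finset


noncomputable section Stmt13Aux

variable {n : ℕ}

/-- `X j - X i` is prime in `MvPolynomial (Fin n) ℝ` for `i ≠ j`. -/
lemma stmt13_prime {i j : Fin n} (h : i ≠ j) :
    Prime (X j - X i : MvPolynomial (Fin n) ℝ) := by
  let e : Option {k : Fin n // k ≠ j} ≃ Fin n := Equiv.optionSubtypeNe j
  let T := (MvPolynomial.renameEquiv ℝ e.symm).trans
    (MvPolynomial.optionEquivLeft ℝ {k : Fin n // k ≠ j})
  have hT : T (X j - X i) = Polynomial.X - Polynomial.C (X ⟨i, h⟩) := by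
    have h1 : T (X j) = Polynomial.X := by
      simp [T, e, renameEquiv_apply, rename_X, Equiv.optionSubtypeNe_symm_self,
        optionEquivLeft_X_none]
    have h2 : T (X i) = Polynomial.C (X ⟨i, h⟩) := by
      simp [T, e, renameEquiv_apply, rename_X, Equiv.optionSubtypeNe_symm_of_ne h,
        optionEquivLeft_X_some]
    rw [map_sub, h1, h2]
  have hP : Prime (T (X j - X i)) := by rw [hT]; exact Polynomial.prime_X_sub_C _
  exact (MulEquiv.prime_iff T).mp hP

/-- substitution `X j ↦ X i` changes a polynomial by a multiple of `X j - X i`. -/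
lemma stmt13_sub_dvd (i j : Fin n) (f : MvPolynomial (Fin n) ℝ) :
    (X j - X i) ∣ f - aeval (Function.update X j (X i)) f := by
  induction f using MvPolynomial.induction_on with
  | C a => simp
  | add p q hp hq =>
      have := dvd_add hp hq
      convert this using 1
      simp only [map_add]; ring
  | mul_X p k hp =>
      have h2 : ((X j : MvPolynomial (Fin n) ℝ) - X i) ∣
          aeval (Function.update X j (X i)) p * (X k - Function.update X j (X i) k) := by
        rcases eq_or_ne k j with rfl | hk
        · rw [Function.update_self]
          exact dvd_mul_left _ _
        · rw [Function.update_of_ne hk]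
          simp
      have := dvd_add (hp.mul_right (X k)) h2
      convert this using 1
      rw [map_mul, aeval_X]
      ring

/-- non-divisibility between distinct Vandermonde factors. -/
lemma stmt13_not_dvd {i j k l : Fin n} (hij : i < j) (hkl : k < l)
    (hne : (i, j) ≠ (k, l)) :
    ¬ (X l - X k : MvPolynomial (Fin n) ℝ) ∣ (X j - X i) := by
  rintro ⟨f, hf⟩
  have key : ∃ t : Fin n → ℝ, t l = t k ∧ t j ≠ t i := by
    by_cases hi : i = k ∨ i = l
    · -- use indicator of j; need j ∉ {k, l}
      have hjk : j ≠ k := by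
        rcases hi with rfl | rfl
        · exact hij.ne'
        · exact fun h => absurd (h ▸ hkl) (lt_asymm hij)
      have hjl : j ≠ l := by
        rcases hi with rfl | rfl
        · rintro rfl; exact hne rfl
        · rintro rfl; exact absurd hij (lt_irrefl _)
      refine ⟨fun m => if m = j then 1 else 0, by simp [hjl.symm, hjk.symm], ?_⟩
      simp only [if_pos rfl, if_neg hij.ne]
      norm_num
    · push_neg at hi
      refine ⟨fun m => if m = i then 1 else 0, by simp [hi.1.symm, hi.2.symm], ?_⟩
      simp only [if_pos rfl, if_neg hij.ne']
      norm_num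
  obtain ⟨t, htl, htj⟩ := key
  have := congrArg (eval t) hf
  simp only [map_sub, map_mul, eval_X, htl, sub_self, zero_mul] at this
  exact htj (sub_eq_zero.mp this)

/-- product of pairwise non-dividing primes each dividing `A` divides `A`. -/
lemma stmt13_prod_dvd {α : Type*} [CommMonoidWithZero α] [IsCancelMulZero α] {ι : Type*}
    [DecidableEq ι] (s : Finset ι) (f : ι → α) :
    (∀ a ∈ s, Prime (f a)) → (∀ a ∈ s, ∀ b ∈ s, a ≠ b → ¬ f a ∣ f b) →
    ∀ A, (∀ a ∈ s, f a ∣ A) → (∏ a ∈ s, f a) ∣ A := by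
  induction s using Finset.induction_on with
  | empty => intro _ _ A _; simp
  | insert _ _ ha ih =>
      rename_i a s
      intro hp hnd A hd
      obtain ⟨B, rfl⟩ := hd a (mem_insert_self a s)
      have hB : ∀ b ∈ s, f b ∣ B := by
        intro b hb
        have hbprime := hp b (mem_insert_of_mem hb)
        have hbndvd : ¬ f b ∣ f a := hnd b (mem_insert_of_mem hb) a (mem_insert_self a s)
          (fun h => ha (h ▸ hb))
        exact (hbprime.dvd_or_dvd (hd b (mem_insert_of_mem hb))).resolve_left hbndvd
      rw [Finset.prod_insert ha]
      exact mul_dvd_mul_left (f a)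
        (ih (fun x hx => hp x (mem_insert_of_mem hx))
          (fun x hx y hy => hnd x (mem_insert_of_mem hx) y (mem_insert_of_mem hy)) B hB)

end Stmt13Aux

/-- alternant identity: for a partition `λ_1 ≥ ⋯ ≥ λ_n ≥ 0`, the
alternant `det[X_i^{λ_j + n − j}]` is divisible by the Vandermonde
`V = ∏_{i<j} (X_j − X_i)` in the polynomial ring, the quotient `s_λ` (the Schur
polynomial) being a symmetric polynomial; evaluating at distinct reals `t_1, …, t_n`
gives `det[t_i^{λ_j+n−j}] = V(t) · s_λ(t)`. -/
theorem stmt13 (n : ℕ) (lam : Fin n → ℕ) (hlam : Antitone lam) :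
    ∃ s : MvPolynomial (Fin n) ℝ,
      s.IsSymmetric ∧
      (∏ i : Fin n, ∏ j ∈ univ.filter (fun j => i < j), (X j - X i)) * s =
        Matrix.det (Matrix.of fun i j : Fin n =>
          (X i : MvPolynomial (Fin n) ℝ) ^ (lam j + (n - 1 - (j : ℕ)))) ∧
      ∀ t : Fin n → ℝ, Function.Injective t →
        Matrix.det (Matrix.of fun i j : Fin n => t i ^ (lam j + (n - 1 - (j : ℕ)))) =
          (∏ i : Fin n, ∏ j ∈ univ.filter (fun j => i < j), (t j - t i)) * eval t s := by
  classical
  set M : Matrix (Fin n) (Fin n) (MvPolynomial (Fin n) ℝ) :=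
    Matrix.of fun i j : Fin n => (X i : MvPolynomial (Fin n) ℝ) ^ (lam j + (n - 1 - (j : ℕ)))
    with hM
  set A : MvPolynomial (Fin n) ℝ := M.det with hA
  set V : MvPolynomial (Fin n) ℝ :=
    ∏ i : Fin n, ∏ j ∈ univ.filter (fun j => i < j), (X j - X i) with hV
  have hIoi : ∀ i : Fin n, univ.filter (fun j => i < j) = Finset.Ioi i := by
    intro i; ext j; simp
  -- V is the Vandermonde determinant
  have hVdet : V = (Matrix.vandermonde fun i : Fin n => (X i : MvPolynomial (Fin n) ℝ)).det := by
    rw [Matrix.det_vandermonde, hV]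
    exact Finset.prod_congr rfl fun i _ => by rw [hIoi]
  -- each factor divides A
  have hfac : ∀ i j : Fin n, i ≠ j → (X j - X i) ∣ A := by
    intro i j hij
    have hzero : aeval (Function.update X j (X i) :
        Fin n → MvPolynomial (Fin n) ℝ) A = 0 := by
      rw [hA, AlgHom.map_det, AlgHom.mapMatrix_apply]
      apply Matrix.det_zero_of_row_eq hij
      funext c
      simp only [Matrix.map_apply, hM, Matrix.of_apply, map_pow, aeval_X,
        Function.update_self, Function.update_of_ne hij]
    have := stmt13_sub_dvd i j A
    rwa [hzero, sub_zero] at this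
  -- the Vandermonde divides A
  have hVdvd : V ∣ A := by
    rw [hV, Finset.prod_sigma']
    apply stmt13_prod_dvd _ _ ?hp ?hnd A ?hd
    case hp =>
      rintro ⟨a1, a2⟩ ha
      rw [Finset.mem_sigma, Finset.mem_filter] at ha
      exact stmt13_prime (ne_of_lt ha.2.2)
    case hnd =>
      rintro ⟨a1, a2⟩ ha ⟨b1, b2⟩ hb hab
      rw [Finset.mem_sigma, Finset.mem_filter] at ha hb
      have hne : (b1, b2) ≠ (a1, a2) := by
        intro h
        apply hab
        rw [Prod.mk.injEq] at h
        obtain ⟨h1, h2⟩ := h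
        subst h1; subst h2; rfl
      exact stmt13_not_dvd hb.2.2 ha.2.2 hne
    case hd =>
      rintro ⟨a1, a2⟩ ha
      rw [Finset.mem_sigma, Finset.mem_filter] at ha
      exact hfac a1 a2 (ne_of_lt ha.2.2)
  obtain ⟨s, hs⟩ := hVdvd
  have hVne : V ≠ 0 := by
    rw [hV]
    apply Finset.prod_ne_zero_iff.mpr
    intro i _
    apply Finset.prod_ne_zero_iff.mpr
    intro j hj
    rw [Finset.mem_filter] at hj
    exact (stmt13_prime (ne_of_lt hj.2)).ne_zero
  -- symmetry of s
  have hsymm : s.IsSymmetric := by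
    intro σ
    set c : MvPolynomial (Fin n) ℝ := ((Equiv.Perm.sign σ : ℤ) : MvPolynomial (Fin n) ℝ) with hc
    have hcne : c ≠ 0 := by
      rw [hc, Int.cast_ne_zero]
      exact Units.ne_zero _
    have hrA : rename σ A = c * A := by
      rw [hA, AlgHom.map_det, AlgHom.mapMatrix_apply]
      have hmap : M.map (rename ⇑σ) = fun i => M (σ i) := by
        funext i j
        simp only [Matrix.map_apply, hM, Matrix.of_apply, map_pow, rename_X]
      rw [hmap]
      rw [show (Matrix.det fun i => M (σ i)) = (M.submatrix (⇑σ) id).det from rfl,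
        Matrix.det_permute σ M]
    have hrV : rename σ V = c * V := by
      rw [hVdet, AlgHom.map_det, AlgHom.mapMatrix_apply]
      have hmap : (Matrix.vandermonde fun i : Fin n => (X i : MvPolynomial (Fin n) ℝ)).map
          (rename ⇑σ) =
          fun i => (Matrix.vandermonde fun i : Fin n => (X i : MvPolynomial (Fin n) ℝ)) (σ i) := by
        funext i j
        simp only [Matrix.map_apply, Matrix.vandermonde, Matrix.of_apply, map_pow, rename_X]
      rw [hmap]
      rw [show (Matrix.det fun i =>
          (Matrix.vandermonde fun i : Fin n => (X i : MvPolynomial (Fin n) ℝ)) (σ i)) =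
          ((Matrix.vandermonde fun i : Fin n =>
            (X i : MvPolynomial (Fin n) ℝ)).submatrix (⇑σ) id).det from rfl,
        Matrix.det_permute σ _]
    have key2 : c * (V * rename σ s) = c * (V * s) := by
      calc c * (V * rename σ s) = (c * V) * rename σ s := by ring
        _ = rename σ V * rename σ s := by rw [hrV]
        _ = rename σ (V * s) := (map_mul _ _ _).symm
        _ = rename σ A := by rw [← hs]
        _ = c * A := hrA
        _ = c * (V * s) := by rw [hs]
    exact mul_left_cancel₀ hVne (mul_left_cancel₀ hcne key2)
  refine ⟨s, hsymm, hs.symm, ?_⟩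
  intro t _
  have key := congrArg (eval t) hs
  rw [map_mul] at key
  have h1 : eval t A = Matrix.det (Matrix.of fun i j : Fin n =>
      t i ^ (lam j + (n - 1 - (j : ℕ)))) := by
    rw [hA, RingHom.map_det, RingHom.mapMatrix_apply]
    congr 1
    funext i j
    simp [hM]
  have h2 : eval t V = ∏ i : Fin n, ∏ j ∈ univ.filter (fun j => i < j), (t j - t i) := by
    rw [hV, map_prod]
    exact Finset.prod_congr rfl fun i _ => by
      rw [map_prod]
      exact Finset.prod_congr rfl fun j _ => by simp
  rw [h1, h2] at key
  exact key
end
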